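/- Fix $0<c<1$ and reals $\alpha>\alpha'>\max(3/2,\,1/c)$. There exist constants $C$ and $n_0$ depending on $c$ (and $\alpha,\alpha'$) such that for all positive integers $d,\delta$ and all $n\ge n_0$ and $m$ with $n+n^{c}\le m\le 2n$: $\big|\Psi((d,n),(\delta,m))\big| \le C\Big\{ n\big(\tfrac{\log(m-n)}{m-n}\big)^{1/c} + \frac{1}{d\delta}\sum_{(j,h)} e^{-3n(\frac{j}{d}-\frac{h}{\delta})^2}\Big\}$, where the sum is over integer pairs $(j,h)$ with $0<\frac{\pi j}{d}\le 2\big(\tfrac{2\alpha\log(m-n)}{m-n}\big)^{1/2}$ and $0<\frac{\pi h}{\delta}\le \big(\tfrac{2\alpha\log(m-n)}{m-n}\big)^{1/2}$. In particular, if $\max(d,\delta)<\frac{\pi}{2\sqrt{2\alpha}}\big(\tfrac{m-n}{\log(m-n)}\big)^{1/2}$, then $\big|\Psi((d,n),(\delta,m))\big|\le C\, n\big(\tfrac{\log(m-n)}{m-n}\big)^{1/c}$. -/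

import Mathlib

open Finset Real
open scoped Classical
set_option maxHeartbeats 1000000

noncomputable section

/-- The trigonometric sum `Ψ((d,n),(δ,m))` of (2.6). -/
def Psi (d δ n m : ℕ) : ℂ :=
  (1 / ((d : ℂ) * (δ : ℂ))) * ∑ j ∈ Finset.Ico 1 d, ∑ h ∈ Finset.Ico 1 δ,
    Complex.exp (Complex.I * Real.pi *
        ((j : ℂ) / (d : ℂ) * (n : ℂ) + (h : ℂ) / (δ : ℂ) * (m : ℂ)))
      * ((Real.cos (Real.pi * ((j : ℝ) / (d : ℝ) + (h : ℝ) / (δ : ℝ))) : ℂ)) ^ n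
      * ((Real.cos (Real.pi * (h : ℝ) / (δ : ℝ)) : ℂ)) ^ (m - n)

lemma aux_cos_quad {t : ℝ} (ht : |t| ≤ 1) :
    Real.cos t ≤ 1 - t^2/2 + t^4 * (5/96) := by
  have h := abs_le.mp (Real.cos_bound ht)
  have h2 : |t|^2 = t^2 := sq_abs t
  have h4 : |t|^4 = t^4 := by rw [show (4:ℕ) = 2*2 from rfl, pow_mul, pow_mul, h2]
  nlinarith [h.2]

lemma aux_gauss {t : ℝ} (ht : |t| ≤ 1) (n : ℕ) :
    |Real.cos t| ^ n ≤ Real.exp (-(3*(n:ℝ)) * (t/Real.pi)^2) := by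
  have hπ := Real.pi_gt_three
  have habs := abs_le.mp ht
  have h0 : 0 ≤ Real.cos t := Real.cos_nonneg_of_mem_Icc ⟨by linarith, by linarith⟩
  have ht2 : t^2 ≤ 1 := by nlinarith [sq_abs t, abs_nonneg t]
  have ht4 : t^4 ≤ t^2 := by nlinarith [sq_nonneg t]
  have h1 : Real.cos t ≤ Real.exp (-(43/96) * t^2) := by
    have hq := aux_cos_quad ht
    have h2 := Real.add_one_le_exp (-(43/96)*t^2)
    nlinarith
  calc |Real.cos t| ^ n = Real.cos t ^ n := by rw [abs_of_nonneg h0]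
    _ ≤ Real.exp (-(43/96)*t^2) ^ n := pow_le_pow_left₀ h0 h1 n
    _ = Real.exp ((n:ℝ) * (-(43/96)*t^2)) := (Real.exp_nat_mul _ n).symm
    _ ≤ Real.exp (-(3*(n:ℝ)) * (t/Real.pi)^2) := by
        apply Real.exp_le_exp.mpr
        rw [div_pow]
        have hπ2 : (9:ℝ) ≤ Real.pi^2 := by nlinarith
        have hn0 : (0:ℝ) ≤ n := Nat.cast_nonneg n
        rw [show ((n:ℝ) * (-(43 / 96) * t ^ 2)) = -(43/96 * ((n:ℝ) * t^2)) by ring,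
          show (-(3 * (n:ℝ)) * (t ^ 2 / Real.pi ^ 2)) = -(3 * ((n:ℝ) * t^2) / Real.pi^2) by ring,
          neg_le_neg_iff, div_le_iff₀ (by positivity)]
        nlinarith [mul_nonneg hn0 (sq_nonneg t)]

lemma aux_middle {E s : ℝ} (hE0 : 0 ≤ E) (h1 : E ≤ s) (h2 : s ≤ Real.pi - E) :
    |Real.cos s| ≤ Real.cos E := by
  rw [abs_le]
  constructor
  · have h3 := Real.cos_le_cos_of_nonneg_of_le_pi (show 0 ≤ s by linarith)
      (show Real.pi - E ≤ Real.pi by linarith) h2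
    rw [Real.cos_pi_sub] at h3; linarith
  · exact Real.cos_le_cos_of_nonneg_of_le_pi hE0 (by linarith) h1

lemma aux_cosE {E r : ℝ} (hE0 : 0 ≤ E) (hE1 : E ≤ 1) (hr : 0 < r)
    (hE2 : E^2 ≤ 48/5 * (1 - r)) :
    Real.cos E ≤ Real.exp (-(r * E^2 / 2)) := by
  have hq := aux_cos_quad (t := E) (by rwa [abs_of_nonneg hE0])
  have h2 := Real.add_one_le_exp (-(r*E^2/2))
  nlinarith [sq_nonneg E, sq_nonneg (E^2)]

/-- absolute value of one term of the double sum -/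
def Aterm (d δ n M : ℕ) (j h : ℕ) : ℝ :=
  |Real.cos (Real.pi * ((j:ℝ)/(d:ℝ) + (h:ℝ)/(δ:ℝ)))| ^ n * |Real.cos (Real.pi * (h:ℝ)/(δ:ℝ))| ^ M

/-- the Gaussian majorant -/
def gterm (d δ n : ℕ) (E : ℝ) (a b : ℕ) : ℝ :=
  if 0 < a ∧ Real.pi * (a:ℝ)/(d:ℝ) ≤ 2*E ∧ 0 < b ∧ Real.pi * (b:ℝ)/(δ:ℝ) ≤ E
  then Real.exp (-(3*(n:ℝ)) * ((a:ℝ)/(d:ℝ) - (b:ℝ)/(δ:ℝ))^2) else 0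

lemma gterm_nonneg (d δ n : ℕ) (E : ℝ) (a b : ℕ) : 0 ≤ gterm d δ n E a b := by
  unfold gterm; split
  · positivity
  · exact le_refl 0

/-- pointwise bound on each term -/
lemma point_gen (d δ n M j h : ℕ) (E W : ℝ) (hd : 0 < d) (hδ : 0 < δ)
    (hj1 : 1 ≤ j) (hj2 : j < d) (hh1 : 1 ≤ h) (hh2 : h < δ)
    (hE0 : 0 < E) (hE13 : 3*E ≤ 1)
    (hW : ∀ k : ℕ, M ≤ k → Real.cos E ^ k ≤ W) (hMn : M ≤ n) :
    Aterm d δ n M j h ≤ W + (gterm d δ n E j h + gterm d δ n E (d-j) h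
      + gterm d δ n E j (δ-h) + gterm d δ n E (d-j) (δ-h)) := by
  have hπ := Real.pi_gt_three
  have hπ0 := Real.pi_pos
  have hdR : (0:ℝ) < d := by exact_mod_cast hd
  have hδR : (0:ℝ) < δ := by exact_mod_cast hδ
  have hjR : (1:ℝ) ≤ (j:ℝ) := by exact_mod_cast hj1
  have hhR : (1:ℝ) ≤ (h:ℝ) := by exact_mod_cast hh1
  have hjdR : (j:ℝ) < d := by exact_mod_cast hj2
  have hhδR : (h:ℝ) < δ := by exact_mod_cast hh2
  have hu0 : 0 < (j:ℝ)/d := by positivity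
  have hv0 : 0 < (h:ℝ)/δ := by positivity
  have hu1 : (j:ℝ)/d < 1 := (div_lt_one hdR).mpr hjdR
  have hv1 : (h:ℝ)/δ < 1 := (div_lt_one hδR).mpr hhδR
  set u := (j:ℝ)/d with hu
  set v := (h:ℝ)/δ with hv
  unfold Aterm
  rw [show Real.pi * ((j:ℝ)/(d:ℝ) + (h:ℝ)/(δ:ℝ)) = Real.pi * u + Real.pi * v by
        rw [hu, hv]; ring,
    show Real.pi * (h:ℝ)/(δ:ℝ) = Real.pi * v by rw [hv]; ring]
  set x := Real.pi * u with hx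
  set y := Real.pi * v with hy
  have hx0 : 0 < x := by rw [hx]; positivity
  have hy0 : 0 < y := by rw [hy]; positivity
  have hxπ : x < Real.pi := by
    rw [hx]; simpa using mul_lt_of_lt_one_right hπ0 hu1
  have hyπ : y < Real.pi := by
    rw [hy]; simpa using mul_lt_of_lt_one_right hπ0 hv1
  have hcosE0 : (0:ℝ) ≤ Real.cos E :=
    Real.cos_nonneg_of_mem_Icc ⟨by linarith, by linarith⟩
  have hW0 : 0 ≤ W := le_trans (pow_nonneg hcosE0 M) (hW M le_rfl)
  have hg1 := gterm_nonneg d δ n E j h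
  have hg2 := gterm_nonneg d δ n E (d-j) h
  have hg3 := gterm_nonneg d δ n E j (δ-h)
  have hg4 := gterm_nonneg d δ n E (d-j) (δ-h)
  have hA1nn : (0:ℝ) ≤ |Real.cos (x+y)| ^ n := pow_nonneg (abs_nonneg _) n
  have hA2nn : (0:ℝ) ≤ |Real.cos y| ^ M := pow_nonneg (abs_nonneg _) M
  have hA1le : |Real.cos (x+y)| ^ n ≤ 1 := pow_le_one₀ (abs_nonneg _) (Real.abs_cos_le_one _)
  have hA2le : |Real.cos y| ^ M ≤ 1 := pow_le_one₀ (abs_nonneg _) (Real.abs_cos_le_one _)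
  have hdj : ((d-j:ℕ):ℝ) = (d:ℝ) - (j:ℝ) := by
    push_cast [Nat.cast_sub (le_of_lt hj2)]; ring
  have hδh : ((δ-h:ℕ):ℝ) = (δ:ℝ) - (h:ℝ) := by
    push_cast [Nat.cast_sub (le_of_lt hh2)]; ring
  have hdju : ((d:ℝ)-(j:ℝ))/d = 1 - u := by rw [hu]; field_simp
  have hδhv : ((δ:ℝ)-(h:ℝ))/δ = 1 - v := by rw [hv]; field_simp
  -- uniform Gaussian case helper
  have gcase : ∀ (a b : ℕ) (t : ℝ), 0 < a → 0 < b →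
      Real.pi * ((a:ℝ)/(d:ℝ)) ≤ 2*E → Real.pi * ((b:ℝ)/(δ:ℝ)) ≤ E →
      |Real.cos (x+y)| = |Real.cos t| → |t| ≤ 1 →
      ((a:ℝ)/(d:ℝ) - (b:ℝ)/(δ:ℝ))^2 ≤ (t/Real.pi)^2 →
      |Real.cos (x+y)| ^ n * |Real.cos y| ^ M ≤ gterm d δ n E a b := by
    intro a b t ha hb hca hcb hceq ht1 hq
    have : gterm d δ n E a b
        = Real.exp (-(3*(n:ℝ)) * ((a:ℝ)/(d:ℝ) - (b:ℝ)/(δ:ℝ))^2) := by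
      unfold gterm
      rw [if_pos ⟨ha, by rw [mul_div_assoc]; exact hca, hb, by rw [mul_div_assoc]; exact hcb⟩]
    rw [this]
    calc |Real.cos (x+y)| ^ n * |Real.cos y| ^ M ≤ |Real.cos (x+y)| ^ n * 1 :=
          mul_le_mul_of_nonneg_left hA2le hA1nn
      _ = |Real.cos t| ^ n := by rw [mul_one, hceq]
      _ ≤ Real.exp (-(3*(n:ℝ)) * (t/Real.pi)^2) := aux_gauss ht1 n
      _ ≤ Real.exp (-(3*(n:ℝ)) * ((a:ℝ)/(d:ℝ) - (b:ℝ)/(δ:ℝ))^2) := by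
          apply Real.exp_le_exp.mpr
          have h9 := mul_le_mul_of_nonneg_left hq (show (0:ℝ) ≤ 3*(n:ℝ) by positivity)
          linarith only [h9]
  -- middle case helper
  have mcase : ∀ s : ℝ, |Real.cos (x+y)| = |Real.cos s| → E ≤ s → s ≤ Real.pi - E →
      |Real.cos (x+y)| ^ n * |Real.cos y| ^ M ≤ W := by
    intro s hceq h1 h2
    calc |Real.cos (x+y)| ^ n * |Real.cos y| ^ M ≤ |Real.cos (x+y)| ^ n * 1 :=
          mul_le_mul_of_nonneg_left hA2le hA1nn
      _ = |Real.cos s| ^ n := by rw [mul_one, hceq]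
      _ ≤ Real.cos E ^ n := pow_le_pow_left₀ (abs_nonneg _) (aux_middle hE0.le h1 h2) n
      _ ≤ W := hW n hMn
  rcases lt_or_ge y E with hyE | hyE
  · -- y < E
    rcases le_or_gt x (2*E) with hx2 | hx2
    · -- Gaussian at (j, h), t = x + y
      have hb := gcase j h (x+y) hj1 hh1
        (by rw [← hu, ← hx]; exact hx2) (by rw [← hv, ← hy]; linarith)
        rfl (by rw [abs_of_pos (by linarith)]; linarith) ?_
      · linarith only [hb, hg1, hg2, hg3, hg4, hW0]
      · have he : (x+y)/Real.pi = u + v := by rw [hx, hy]; field_simp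
        rw [← hu, ← hv, he]
        nlinarith only [mul_pos hu0 hv0]
    · rcases le_or_gt x (Real.pi - 2*E) with hx3 | hx3
      · -- middle, s = x+y
        have hb := mcase (x+y) rfl (by linarith) (by linarith)
        linarith only [hb, hg1, hg2, hg3, hg4, hW0]
      · -- Gaussian at (d-j, h), t = x+y-π
        have hb := gcase (d-j) h (x+y-Real.pi) (by omega) hh1 ?_
          (by rw [← hv, ← hy]; linarith) ?_ (by rw [abs_le]; constructor <;> linarith) ?_
        · linarith only [hb, hg1, hg2, hg3, hg4, hW0]
        · rw [hdj, hdju]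
          have : Real.pi * (1-u) = Real.pi - x := by rw [hx]; ring
          rw [this]; linarith
        · exact (by rw [Real.cos_sub_pi, abs_neg] :
            |Real.cos (x+y-Real.pi)| = |Real.cos (x+y)|).symm
        · have he : (x+y-Real.pi)/Real.pi = u + v - 1 := by rw [hx, hy]; field_simp
          rw [hdj, hdju, ← hv, he]
          exact le_of_eq (by ring)
  · rcases le_or_gt y (Real.pi - E) with hyE2 | hyE2
    · -- middle, s = y : bound by second factor
      have hmid : |Real.cos y| ≤ Real.cos E := aux_middle hE0.le hyE hyE2
      have hb : |Real.cos (x+y)| ^ n * |Real.cos y| ^ M ≤ W := by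
        calc |Real.cos (x+y)| ^ n * |Real.cos y| ^ M ≤ 1 * |Real.cos y| ^ M :=
              mul_le_mul_of_nonneg_right hA1le hA2nn
          _ = |Real.cos y| ^ M := one_mul _
          _ ≤ Real.cos E ^ M := pow_le_pow_left₀ (abs_nonneg _) hmid M
          _ ≤ W := hW M le_rfl
      linarith only [hb, hg1, hg2, hg3, hg4]
    · -- y > π - E
      have hyy0 : 0 < Real.pi - y := by linarith
      have hyyE : Real.pi - y < E := by linarith
      have hcxy : |Real.cos (x+y)| = |Real.cos (x - (Real.pi - y))| := by
        have harg : x - (Real.pi - y) = (x + y) - Real.pi := by ring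
        rw [harg, Real.cos_sub_pi, abs_neg]
      have hcondb : Real.pi * (((δ-h:ℕ):ℝ)/(δ:ℝ)) ≤ E := by
        rw [hδh, hδhv]
        have : Real.pi * (1-v) = Real.pi - y := by rw [hy]; ring
        rw [this]; linarith
      rcases le_or_gt x (2*E) with hx2 | hx2
      · -- Gaussian at (j, δ-h), t = x - (π - y)
        have hb := gcase j (δ-h) (x - (Real.pi - y)) hj1 (by omega)
          (by rw [← hu, ← hx]; exact hx2) hcondb hcxy
          (by rw [abs_le]; constructor <;> linarith) ?_
        · linarith only [hb, hg1, hg2, hg3, hg4, hW0]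
        · have he : (x - (Real.pi - y))/Real.pi = u - (1 - v) := by
            rw [hx, hy]; field_simp
          rw [hδh, hδhv, ← hu, he]
      · rcases le_or_gt x (Real.pi - 2*E) with hx3 | hx3
        · -- middle, s = x - (π - y)
          have hb := mcase (x - (Real.pi - y)) hcxy (by linarith) (by linarith)
          linarith only [hb, hg1, hg2, hg3, hg4, hW0]
        · -- Gaussian at (d-j, δ-h), t = x - (π - y) - π
          have hceq2 : |Real.cos (x+y)| = |Real.cos (x - (Real.pi - y) - Real.pi)| := by
            have harg : x - (Real.pi - y) - Real.pi = (x + y - Real.pi) - Real.pi := by ring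
            rw [harg, Real.cos_sub_pi, Real.cos_sub_pi, neg_neg]
          have hb := gcase (d-j) (δ-h) (x - (Real.pi - y) - Real.pi) (by omega) (by omega) ?_
            hcondb hceq2 (by rw [abs_le]; constructor <;> linarith) ?_
          · linarith only [hb, hg1, hg2, hg3, hg4, hW0]
          · rw [hdj, hdju]
            have : Real.pi * (1-u) = Real.pi - x := by rw [hx]; ring
            rw [this]; linarith
          · have he : (x - (Real.pi - y) - Real.pi)/Real.pi = u - (1 - v) - 1 := by
              rw [hx, hy]; field_simp
            rw [hdj, hδh, hdju, hδhv, he]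
            nlinarith only [mul_pos (show (0:ℝ) < 1 - u by linarith only [hu1])
              (show (0:ℝ) < 1 - v by linarith only [hv1])]

lemma aux_reflect (d : ℕ) (F : ℕ → ℝ) :
    ∑ j ∈ Finset.Ico 1 d, F (d - j) = ∑ j ∈ Finset.Ico 1 d, F j := by
  apply Finset.sum_bij (fun j _ => d - j)
  · intro a ha; rw [Finset.mem_Ico] at *; omega
  · intro a ha b hb hab; rw [Finset.mem_Ico] at *; omega
  · intro b hb; rw [Finset.mem_Ico] at hb
    exact ⟨d - b, Finset.mem_Ico.mpr (by omega), by omega⟩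
  · intro a ha; rfl

lemma habs_gen (d δ n m : ℕ) :
    ‖Psi d δ n m‖ ≤ (1/((d:ℝ)*(δ:ℝ))) *
      ∑ j ∈ Finset.Ico 1 d, ∑ h ∈ Finset.Ico 1 δ, Aterm d δ n (m-n) j h := by
  rw [Psi, norm_mul]
  have h1 : ‖1/((d:ℂ)*(δ:ℂ))‖ = 1/((d:ℝ)*(δ:ℝ)) := by
    rw [norm_div, norm_one, norm_mul, Complex.norm_natCast, Complex.norm_natCast]
  rw [h1]
  apply mul_le_mul_of_nonneg_left ?_ (by positivity)
  refine le_trans (norm_sum_le _ _) (Finset.sum_le_sum fun j _ => ?_)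
  refine le_trans (norm_sum_le _ _) (Finset.sum_le_sum fun h _ => ?_)
  rw [norm_mul, norm_mul, norm_pow, norm_pow, Complex.norm_real, Complex.norm_real,
    Real.norm_eq_abs, Real.norm_eq_abs]
  have harg : (Complex.I * (Real.pi:ℂ) * ((j:ℂ)/(d:ℂ)*(n:ℂ) + (h:ℂ)/(δ:ℂ)*(m:ℂ)))
      = ((Real.pi * ((j:ℝ)/(d:ℝ)*(n:ℝ) + (h:ℝ)/(δ:ℝ)*(m:ℝ)) : ℝ) : ℂ) * Complex.I := by
    push_cast; ring
  rw [harg, Complex.norm_exp_ofReal_mul_I, one_mul]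
  exact le_of_eq rfl

/-- Proposition 2.1 (the weakly dependent case `n + n^c ≤ m ≤ 2n`). -/
theorem Psi_bound_weakly_dependent_close
    (c α α' : ℝ) (hc0 : 0 < c) (hc1 : c < 1)
    (hα' : max (3/2) (1/c) < α') (hαα' : α' < α) :
    ∃ (C : ℝ) (n₀ : ℕ), ∀ d δ n m : ℕ, 0 < d → 0 < δ → n₀ ≤ n →
      (n : ℝ) + (n : ℝ) ^ c ≤ (m : ℝ) → m ≤ 2 * n →
      (‖Psi d δ n m‖ ≤ C *
        ((n : ℝ) * (Real.log ((m - n : ℕ) : ℝ) / ((m - n : ℕ) : ℝ)) ^ ((1:ℝ)/c)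
          + (1 / ((d : ℝ) * (δ : ℝ))) *
            ∑' p : ℕ × ℕ,
              if 0 < p.1 ∧
                  Real.pi * (p.1 : ℝ) / (d : ℝ)
                    ≤ 2 * Real.sqrt (2 * α * Real.log ((m - n : ℕ) : ℝ) / ((m - n : ℕ) : ℝ)) ∧
                  0 < p.2 ∧
                  Real.pi * (p.2 : ℝ) / (δ : ℝ)
                    ≤ Real.sqrt (2 * α * Real.log ((m - n : ℕ) : ℝ) / ((m - n : ℕ) : ℝ))
              then Real.exp (-(3 * (n : ℝ)) * ((p.1 : ℝ) / (d : ℝ) - (p.2 : ℝ) / (δ : ℝ)) ^ 2)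
              else 0)) ∧
      (max (d : ℝ) (δ : ℝ)
          < Real.pi / (2 * Real.sqrt (2 * α)) *
              Real.sqrt (((m - n : ℕ) : ℝ) / Real.log ((m - n : ℕ) : ℝ)) →
        ‖Psi d δ n m‖ ≤ C *
          ((n : ℝ) * (Real.log ((m - n : ℕ) : ℝ) / ((m - n : ℕ) : ℝ)) ^ ((1:ℝ)/c))) := by
  classical
  have h32 : (3/2:ℝ) < α' := lt_of_le_of_lt (le_max_left _ _) hα'
  have h1c : 1/c < α' := lt_of_le_of_lt (le_max_right _ _) hα'
  have hα'0 : (0:ℝ) < α' := by linarith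
  have hα0 : (0:ℝ) < α := by linarith
  have hc0' : (0:ℝ) < 1/c := by positivity
  have hratio : (0:ℝ) < 1 - α'/α := by
    have h : α'/α < 1 := (div_lt_one hα0).mpr hαα'
    linarith
  have hK0 : (0:ℝ) < min (1/9) (48/5 * (1 - α'/α)) := lt_min (by norm_num) (by positivity)
  have htend : Filter.Tendsto (fun x : ℝ => 2*α*(Real.log x / x)) Filter.atTop (nhds 0) := by
    have h := Real.isLittleO_log_id_atTop.tendsto_div_nhds_zero
    have h2 := h.const_mul (2*α)
    simpa using h2
  obtain ⟨R₁, hR₁⟩ := Filter.eventually_atTop.mp (htend.eventually_lt_const hK0)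
  set R₀ : ℝ := max R₁ 3 with hR₀def
  have hR₀3 : (3:ℝ) ≤ R₀ := le_max_right _ _
  have hR₀0 : (0:ℝ) < R₀ := by linarith
  refine ⟨4, max 1 ⌈R₀ ^ (1/c)⌉₊, ?_⟩
  intro d δ n m hd hδ hn hm1 hm2
  have hn1 : 1 ≤ n := le_trans (le_max_left _ _) hn
  have hn1R : (1:ℝ) ≤ (n:ℝ) := by exact_mod_cast hn1
  have hncR : R₀ ≤ (n:ℝ) ^ c := by
    have h1 : R₀ ^ (1/c) ≤ (n:ℝ) := by
      have h2 := Nat.le_ceil (R₀ ^ (1/c))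
      have h3 : (⌈R₀ ^ (1/c)⌉₊ : ℝ) ≤ (n:ℝ) := by
        exact_mod_cast le_trans (le_max_right _ _) hn
      linarith
    calc R₀ = (R₀ ^ (1/c)) ^ c := by
          rw [← Real.rpow_mul hR₀0.le, one_div_mul_cancel (ne_of_gt hc0), Real.rpow_one]
      _ ≤ (n:ℝ) ^ c := Real.rpow_le_rpow (by positivity) h1 hc0.le
  have hnc1 : (1:ℝ) ≤ (n:ℝ)^c := Real.one_le_rpow hn1R hc0.le
  have hmnR : (n:ℝ) < m := by linarith
  have hmn : n < m := by exact_mod_cast hmnR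
  set M := m - n with hMdef
  have hMcast : ((M:ℕ):ℝ) = (m:ℝ) - (n:ℝ) := by
    rw [hMdef]; push_cast [Nat.cast_sub (le_of_lt hmn)]; ring
  have hMge : (n:ℝ)^c ≤ (M:ℝ) := by rw [hMcast]; linarith
  have hMR₀ : R₀ ≤ (M:ℝ) := le_trans hncR hMge
  have hM3 : (3:ℝ) ≤ (M:ℝ) := le_trans hR₀3 hMR₀
  have hMpos : (0:ℝ) < (M:ℝ) := by linarith
  have hM1 : (1:ℝ) ≤ (M:ℝ) := by linarith
  have hMn : (M:ℝ) ≤ (n:ℝ) := by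
    rw [hMcast]
    have h2n : (m:ℝ) ≤ 2*(n:ℝ) := by exact_mod_cast hm2
    linarith
  have hMnN : M ≤ n := by exact_mod_cast hMn
  set L := Real.log ((M:ℕ):ℝ) with hLdef
  have hL1 : (1:ℝ) ≤ L := by
    rw [hLdef, Real.le_log_iff_exp_le hMpos]
    have h9 := Real.exp_one_lt_d9
    linarith
  have hL0 : (0:ℝ) < L := by linarith
  have hq : 2*α*L/(M:ℝ) < min (1/9) (48/5 * (1 - α'/α)) := by
    have h := hR₁ (M:ℝ) (le_trans (le_max_left _ _) hMR₀)
    calc 2*α*L/(M:ℝ) = 2*α*(Real.log ((M:ℕ):ℝ)/(M:ℝ)) := by rw [hLdef]; ring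
      _ < _ := h
  set E := Real.sqrt (2*α*L/(M:ℝ)) with hEdef
  have hq0 : (0:ℝ) < 2*α*L/(M:ℝ) := by positivity
  have hE0 : 0 < E := Real.sqrt_pos.mpr hq0
  have hE2 : E^2 = 2*α*L/(M:ℝ) := Real.sq_sqrt hq0.le
  have hE13 : E ≤ 1/3 := by
    have h1 : E^2 ≤ 1/9 := by rw [hE2]; exact le_trans hq.le (min_le_left _ _)
    nlinarith only [h1, hE0]
  have hE3 : 3*E ≤ 1 := by linarith
  have hE1 : E ≤ 1 := by linarith
  have hEα : E^2 ≤ 48/5*(1-α'/α) := by rw [hE2]; exact le_trans hq.le (min_le_right _ _)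
  -- the main quantity F
  set F := (n:ℝ) * (L/((M:ℕ):ℝ)) ^ ((1:ℝ)/c) with hFdef
  have hF0 : (0:ℝ) ≤ F := by
    rw [hFdef]; positivity
  -- W := exp(-α' L) satisfies cos E ^ k ≤ W for k ≥ M, and W ≤ F
  have hcosE0 : (0:ℝ) ≤ Real.cos E := by
    have hπ := Real.pi_gt_three
    exact Real.cos_nonneg_of_mem_Icc ⟨by linarith, by linarith⟩
  have hW : ∀ k : ℕ, M ≤ k → Real.cos E ^ k ≤ Real.exp (-(α'*L)) := by
    intro k hk
    have h1 : Real.cos E ≤ Real.exp (-((α'/α) * E^2 / 2)) :=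
      aux_cosE hE0.le hE1 (by positivity)
        (by
          have hr : 1 - α'/α = 1 - α'/α := rfl
          exact hEα)
    have hkM : ((M:ℕ):ℝ) ≤ (k:ℝ) := by exact_mod_cast hk
    have hME : ((M:ℕ):ℝ) * ((α'/α) * E^2 / 2) = α'*L := by
      rw [hE2]; field_simp
    have hnn : (0:ℝ) ≤ (α'/α) * E^2 / 2 := by positivity
    calc Real.cos E ^ k ≤ Real.exp (-((α'/α) * E^2/2)) ^ k := pow_le_pow_left₀ hcosE0 h1 k
      _ = Real.exp ((k:ℝ) * (-((α'/α) * E^2/2))) := (Real.exp_nat_mul _ k).symm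
      _ ≤ Real.exp (-(α'*L)) := by
          apply Real.exp_le_exp.mpr
          have h9 := mul_le_mul_of_nonneg_right hkM hnn
          linarith only [h9, hME.le, hME.ge]
  have hexpF : Real.exp (-(α'*L)) ≤ F := by
    have h1 : ((M:ℕ):ℝ) ^ (-α') = Real.exp (-(α'*L)) := by
      rw [Real.rpow_def_of_pos hMpos, ← hLdef]
      congr 1; ring
    have h2 : ((M:ℕ):ℝ) ^ (-α') ≤ ((M:ℕ):ℝ) ^ (-((1:ℝ)/c)) :=
      Real.rpow_le_rpow_of_exponent_le hM1 (by linarith)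
    have h3 : ((M:ℕ):ℝ) ^ (-((1:ℝ)/c)) = ((((M:ℕ):ℝ))⁻¹) ^ ((1:ℝ)/c) := by
      rw [Real.inv_rpow hMpos.le, ← Real.rpow_neg hMpos.le]
    have h4 : ((((M:ℕ):ℝ))⁻¹) ^ ((1:ℝ)/c) ≤ (L/((M:ℕ):ℝ)) ^ ((1:ℝ)/c) := by
      apply Real.rpow_le_rpow (by positivity) _ (le_of_lt hc0')
      rw [inv_eq_one_div]
      exact (div_le_div_iff_of_pos_right hMpos).mpr hL1
    have h5 : (L/((M:ℕ):ℝ)) ^ ((1:ℝ)/c) ≤ F := by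
      rw [hFdef]
      exact le_mul_of_one_le_left (by positivity) hn1R
    calc Real.exp (-(α'*L)) = ((M:ℕ):ℝ) ^ (-α') := h1.symm
      _ ≤ ((M:ℕ):ℝ) ^ (-((1:ℝ)/c)) := h2
      _ = ((((M:ℕ):ℝ))⁻¹) ^ ((1:ℝ)/c) := h3
      _ ≤ (L/((M:ℕ):ℝ)) ^ ((1:ℝ)/c) := h4
      _ ≤ F := h5
  have hWF : ∀ k : ℕ, M ≤ k → Real.cos E ^ k ≤ F := fun k hk => le_trans (hW k hk) hexpF
  have hgnn : ∀ p : ℕ × ℕ, 0 ≤ gterm d δ n E p.1 p.2 := fun p => gterm_nonneg d δ n E p.1 p.2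
  have hdR : (0:ℝ) < d := by exact_mod_cast hd
  have hδR : (0:ℝ) < δ := by exact_mod_cast hδ
  have hπ3 := Real.pi_gt_three
  have hsummable : Summable (fun p : ℕ × ℕ => gterm d δ n E p.1 p.2) := by
    apply summable_of_ne_finset_zero (s := (Finset.Ico 1 d) ×ˢ (Finset.Ico 1 δ))
    intro p hp
    unfold gterm
    rw [if_neg]
    rintro ⟨h1, h2, h3, h4⟩
    apply hp
    rw [Finset.mem_product, Finset.mem_Ico, Finset.mem_Ico]
    refine ⟨⟨h1, ?_⟩, h3, ?_⟩
    · by_contra hcon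
      push_neg at hcon
      have hc1 : (d:ℝ) ≤ (p.1:ℝ) := by exact_mod_cast hcon
      have hx : Real.pi ≤ Real.pi * (p.1:ℝ)/(d:ℝ) := by
        rw [le_div_iff₀ hdR]
        nlinarith only [hc1, Real.pi_pos, hdR]
      linarith only [hx, h2, hE13, hπ3]
    · by_contra hcon
      push_neg at hcon
      have hc1 : (δ:ℝ) ≤ (p.2:ℝ) := by exact_mod_cast hcon
      have hx : Real.pi ≤ Real.pi * (p.2:ℝ)/(δ:ℝ) := by
        rw [le_div_iff₀ hδR]
        nlinarith only [hc1, Real.pi_pos, hδR]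
      linarith only [hx, h4, hE13, hπ3]
  have hpoint : ∀ j ∈ Finset.Ico 1 d, ∀ h ∈ Finset.Ico 1 δ,
      Aterm d δ n M j h ≤ F + (gterm d δ n E j h + gterm d δ n E (d-j) h
        + gterm d δ n E j (δ-h) + gterm d δ n E (d-j) (δ-h)) := by
    intro j hj h hh
    rw [Finset.mem_Ico] at hj hh
    exact point_gen d δ n M j h E F hd hδ hj.1 hj.2 hh.1 hh.2 hE0 hE3 hWF hMnN
  have hr1 : ∑ j ∈ Finset.Ico 1 d, ∑ h ∈ Finset.Ico 1 δ, gterm d δ n E (d-j) h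
      = ∑ j ∈ Finset.Ico 1 d, ∑ h ∈ Finset.Ico 1 δ, gterm d δ n E j h :=
    aux_reflect d (fun a => ∑ h ∈ Finset.Ico 1 δ, gterm d δ n E a h)
  have hr2 : ∑ j ∈ Finset.Ico 1 d, ∑ h ∈ Finset.Ico 1 δ, gterm d δ n E j (δ-h)
      = ∑ j ∈ Finset.Ico 1 d, ∑ h ∈ Finset.Ico 1 δ, gterm d δ n E j h :=
    Finset.sum_congr rfl (fun j _ => aux_reflect δ (fun b => gterm d δ n E j b))
  have hr3 : ∑ j ∈ Finset.Ico 1 d, ∑ h ∈ Finset.Ico 1 δ, gterm d δ n E (d-j) (δ-h)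
      = ∑ j ∈ Finset.Ico 1 d, ∑ h ∈ Finset.Ico 1 δ, gterm d δ n E j h := by
    calc ∑ j ∈ Finset.Ico 1 d, ∑ h ∈ Finset.Ico 1 δ, gterm d δ n E (d-j) (δ-h)
        = ∑ j ∈ Finset.Ico 1 d, ∑ h ∈ Finset.Ico 1 δ, gterm d δ n E (d-j) h :=
          Finset.sum_congr rfl (fun j _ => aux_reflect δ (fun b => gterm d δ n E (d-j) b))
      _ = _ := hr1
  have hsgT : ∑ j ∈ Finset.Ico 1 d, ∑ h ∈ Finset.Ico 1 δ, gterm d δ n E j h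
      ≤ ∑' p : ℕ × ℕ, gterm d δ n E p.1 p.2 := by
    rw [← Finset.sum_product']
    exact Summable.sum_le_tsum _ (fun p _ => hgnn p) hsummable
  have hsgnn : (0:ℝ) ≤ ∑ j ∈ Finset.Ico 1 d, ∑ h ∈ Finset.Ico 1 δ, gterm d δ n E j h :=
    Finset.sum_nonneg (fun j _ => Finset.sum_nonneg (fun h _ => gterm_nonneg d δ n E j h))
  have hconst : ∑ j ∈ Finset.Ico 1 d, ∑ h ∈ Finset.Ico 1 δ, F ≤ (d:ℝ)*(δ:ℝ)*F := by
    rw [Finset.sum_const, Finset.sum_const, Nat.card_Ico, Nat.card_Ico, smul_smul,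
      nsmul_eq_mul]
    have hc1 : (((d-1)*(δ-1):ℕ):ℝ) ≤ (d:ℝ)*(δ:ℝ) := by
      have : ((d-1)*(δ-1):ℕ) ≤ d*δ := Nat.mul_le_mul (Nat.sub_le d 1) (Nat.sub_le δ 1)
      calc (((d-1)*(δ-1):ℕ):ℝ) ≤ ((d*δ:ℕ):ℝ) := by exact_mod_cast this
        _ = (d:ℝ)*(δ:ℝ) := by push_cast; ring
    exact mul_le_mul_of_nonneg_right hc1 hF0
  have hbig : ∑ j ∈ Finset.Ico 1 d, ∑ h ∈ Finset.Ico 1 δ, Aterm d δ n M j h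
      ≤ (d:ℝ)*(δ:ℝ)*F + 4*(∑' p : ℕ × ℕ, gterm d δ n E p.1 p.2) := by
    calc ∑ j ∈ Finset.Ico 1 d, ∑ h ∈ Finset.Ico 1 δ, Aterm d δ n M j h
        ≤ ∑ j ∈ Finset.Ico 1 d, ∑ h ∈ Finset.Ico 1 δ, (F + (gterm d δ n E j h
            + gterm d δ n E (d-j) h + gterm d δ n E j (δ-h) + gterm d δ n E (d-j) (δ-h))) :=
          Finset.sum_le_sum (fun j hj => Finset.sum_le_sum (fun h hh => hpoint j hj h hh))
      _ = (∑ j ∈ Finset.Ico 1 d, ∑ h ∈ Finset.Ico 1 δ, F)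
          + ((∑ j ∈ Finset.Ico 1 d, ∑ h ∈ Finset.Ico 1 δ, gterm d δ n E j h)
          + (∑ j ∈ Finset.Ico 1 d, ∑ h ∈ Finset.Ico 1 δ, gterm d δ n E (d-j) h)
          + (∑ j ∈ Finset.Ico 1 d, ∑ h ∈ Finset.Ico 1 δ, gterm d δ n E j (δ-h))
          + (∑ j ∈ Finset.Ico 1 d, ∑ h ∈ Finset.Ico 1 δ, gterm d δ n E (d-j) (δ-h))) := by
          simp only [Finset.sum_add_distrib]
      _ = (∑ j ∈ Finset.Ico 1 d, ∑ h ∈ Finset.Ico 1 δ, F)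
          + 4 * (∑ j ∈ Finset.Ico 1 d, ∑ h ∈ Finset.Ico 1 δ, gterm d δ n E j h) := by
          rw [hr1, hr2, hr3]; ring
      _ ≤ (d:ℝ)*(δ:ℝ)*F + 4*(∑' p : ℕ × ℕ, gterm d δ n E p.1 p.2) := by
          have h4 : 4 * (∑ j ∈ Finset.Ico 1 d, ∑ h ∈ Finset.Ico 1 δ, gterm d δ n E j h)
              ≤ 4 * (∑' p : ℕ × ℕ, gterm d δ n E p.1 p.2) := by
            linarith only [hsgT]
          linarith only [hconst, h4]
  have hmain : ‖Psi d δ n m‖ ≤ 4 * (F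
      + 1/((d:ℝ)*(δ:ℝ)) * (∑' p : ℕ × ℕ, gterm d δ n E p.1 p.2)) := by
    have h0 := habs_gen d δ n m
    rw [← hMdef] at h0
    have hT0 : (0:ℝ) ≤ ∑' p : ℕ × ℕ, gterm d δ n E p.1 p.2 := tsum_nonneg hgnn
    have hdd : (0:ℝ) < (d:ℝ)*(δ:ℝ) := by positivity
    calc ‖Psi d δ n m‖
        ≤ 1/((d:ℝ)*(δ:ℝ)) * ∑ j ∈ Finset.Ico 1 d, ∑ h ∈ Finset.Ico 1 δ, Aterm d δ n M j h := h0
      _ ≤ 1/((d:ℝ)*(δ:ℝ)) * ((d:ℝ)*(δ:ℝ)*F + 4*(∑' p : ℕ × ℕ, gterm d δ n E p.1 p.2)) :=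
          mul_le_mul_of_nonneg_left hbig (by positivity)
      _ = F + 4*(1/((d:ℝ)*(δ:ℝ)) * (∑' p : ℕ × ℕ, gterm d δ n E p.1 p.2)) := by
          field_simp
      _ ≤ 4 * (F + 1/((d:ℝ)*(δ:ℝ)) * (∑' p : ℕ × ℕ, gterm d δ n E p.1 p.2)) := by
          have h5 : (0:ℝ) ≤ 1/((d:ℝ)*(δ:ℝ)) * (∑' p : ℕ × ℕ, gterm d δ n E p.1 p.2) :=
            mul_nonneg (by positivity) hT0
          linarith only [hF0, h5]
  have hTeq : (∑' p : ℕ × ℕ,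
      if 0 < p.1 ∧ Real.pi * (p.1:ℝ)/(d:ℝ) ≤ 2*E ∧ 0 < p.2 ∧ Real.pi * (p.2:ℝ)/(δ:ℝ) ≤ E
      then Real.exp (-(3*(n:ℝ)) * ((p.1:ℝ)/(d:ℝ) - (p.2:ℝ)/(δ:ℝ))^2) else 0)
      = ∑' p : ℕ × ℕ, gterm d δ n E p.1 p.2 := by
    apply tsum_congr
    intro p
    rfl
  constructor
  · rw [hTeq]
    exact hmain
  · intro hlt
    have h2α : 0 < Real.sqrt (2*α) := Real.sqrt_pos.mpr (by positivity)
    have hsL : 0 < Real.sqrt L := Real.sqrt_pos.mpr hL0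
    have hsM : 0 < Real.sqrt ((M:ℕ):ℝ) := Real.sqrt_pos.mpr hMpos
    have e1 : E = Real.sqrt (2*α) * Real.sqrt L / Real.sqrt ((M:ℕ):ℝ) := by
      rw [hEdef, show 2*α*L/((M:ℕ):ℝ) = ((2*α)*L)/((M:ℕ):ℝ) by ring,
        Real.sqrt_div (by positivity : (0:ℝ) ≤ (2*α)*L) ((M:ℕ):ℝ),
        Real.sqrt_mul (by positivity : (0:ℝ) ≤ 2*α) L]
    have e2 : Real.sqrt (((M:ℕ):ℝ)/L) = Real.sqrt ((M:ℕ):ℝ)/Real.sqrt L :=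
      Real.sqrt_div hMpos.le L
    have hBE : (Real.pi/(2*Real.sqrt (2*α)) * Real.sqrt (((M:ℕ):ℝ)/L)) * (2*E) = Real.pi := by
      rw [e1, e2]
      field_simp
    have hzero : ∀ p : ℕ × ℕ, gterm d δ n E p.1 p.2 = 0 := by
      intro p
      unfold gterm
      rw [if_neg]
      rintro ⟨h1, h2, h3, h4⟩
      have hp1 : (1:ℝ) ≤ (p.1:ℝ) := by exact_mod_cast h1
      have hπd : Real.pi ≤ 2*E*(d:ℝ) := by
        have h5 : Real.pi * (p.1:ℝ) ≤ 2*E*(d:ℝ) := by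
          rw [div_le_iff₀ hdR] at h2
          linarith only [h2]
        nlinarith only [h5, hp1, Real.pi_pos]
      have hd_lt : (d:ℝ) < Real.pi/(2*Real.sqrt (2*α)) * Real.sqrt (((M:ℕ):ℝ)/L) :=
        lt_of_le_of_lt (le_max_left _ _) hlt
      have h6 := mul_lt_mul_of_pos_right hd_lt (show (0:ℝ) < 2*E by linarith only [hE0])
      rw [hBE] at h6
      nlinarith only [h6, hπd]
    have hTz : (∑' p : ℕ × ℕ, gterm d δ n E p.1 p.2) = 0 := by
      have : (fun p : ℕ × ℕ => gterm d δ n E p.1 p.2) = (fun _ => (0:ℝ)) :=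
        funext (fun p => hzero p)
      rw [this, tsum_zero]
    have h7 := hmain
    rw [hTz] at h7
    simpa using h7
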